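/- For the Shuffle task with n even and all blocks of size 2 (T = n/2 steps, 2 tokens per step), the lower bound equals L_{n/2} = log₂(n!!/(n-1)!!), and this quantity tends to infinity as n → ∞. -/

import Mathlib

open Finset Filter

noncomputable def H2 {β : Type*} [Fintype β] (p : β → ℝ) : ℝ :=
  -∑ b, p b * Real.logb 2 (p b)

noncomputable def KL2 {β : Type*} [Fintype β] (p q : β → ℝ) : ℝ :=
  ∑ b, p b * Real.logb 2 (p b / q b)

def IsPMF {β : Type*} [Fintype β] (p : β → ℝ) : Prop :=
  (∀ b, 0 ≤ p b) ∧ ∑ b, p b = 1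

noncomputable def entOf {Ω γ : Type*} [Fintype Ω] [Fintype γ] [DecidableEq γ]
    (p : Ω → ℝ) (f : Ω → γ) : ℝ :=
  H2 (fun g => ∑ ω, if f ω = g then p ω else 0)

noncomputable def Cof {Ω ι β γ : Type*}
    [Fintype Ω] [Fintype ι] [DecidableEq ι] [Fintype β] [DecidableEq β]
    [Fintype γ] [DecidableEq γ]
    (p : Ω → ℝ) (f : ι → Ω → β) (g : Ω → γ) : ℝ :=
  (∑ i, (entOf p (fun ω => (f i ω, g ω)) - entOf p g))
    - (entOf p (fun ω => ((fun i => f i ω), g ω)) - entOf p g)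

section Helpers

lemma card_perm_agree {n : ℕ} (s : Finset (Fin n)) (σ₀ : Equiv.Perm (Fin n)) :
    (univ.filter fun σ : Equiv.Perm (Fin n) => ∀ a ∈ s, σ a = σ₀ a).card
      = (n - s.card).factorial := by
  classical
  rw [← Fintype.card_subtype]
  have e1 : {σ : Equiv.Perm (Fin n) // ∀ a ∈ s, σ a = σ₀ a}
      ≃ {π : Equiv.Perm (Fin n) // ∀ a ∈ s, π a = a} :=
    Equiv.subtypeEquiv (Equiv.mulLeft σ₀⁻¹) (by
      intro σ
      constructor
      · intro h a ha
        simp [Equiv.Perm.mul_apply, h a ha]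
      · intro h a ha
        have := h a ha
        simp [Equiv.Perm.mul_apply] at this
        exact (Equiv.symm_apply_eq _).mp this)
  have e2 : {π : Equiv.Perm (Fin n) // ∀ a ∈ s, π a = a}
      ≃ {π : Equiv.Perm (Fin n) // ∀ a, ¬(a ∉ s) → π a = a} :=
    Equiv.subtypeEquivRight (by intro π; simp [not_not])
  have e3 : {π : Equiv.Perm (Fin n) // ∀ a, ¬(a ∉ s) → π a = a}
      ≃ Equiv.Perm {a : Fin n // a ∉ s} :=
    (Equiv.Perm.subtypeEquivSubtypePerm (fun a => a ∉ s)).symm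
  rw [Fintype.card_congr ((e1.trans e2).trans e3), Fintype.card_perm]
  congr 1
  rw [Fintype.card_subtype_compl, Fintype.card_coe, Fintype.card_fin]

lemma entOf_const_fiber {Ω γ : Type*} [Fintype Ω] [Nonempty Ω] [Fintype γ] [DecidableEq γ]
    (f : Ω → γ) (c : ℕ) (hc : 0 < c)
    (hfib : ∀ ω : Ω, (univ.filter fun ω' => f ω' = f ω).card = c) :
    entOf (fun _ : Ω => ((Fintype.card Ω : ℝ))⁻¹) f
      = Real.logb 2 ((Fintype.card Ω : ℝ) / c) := by
  classical
  have hN : 0 < Fintype.card Ω := Fintype.card_pos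
  set N := Fintype.card Ω with hNdef
  have hq : ∀ g : γ, (∑ ω, if f ω = g then ((N : ℝ))⁻¹ else 0)
      = ((univ.filter fun ω => f ω = g).card : ℝ) / N := by
    intro g
    rw [← Finset.sum_filter, Finset.sum_const, nsmul_eq_mul]
    ring
  have himg : (univ.image f).card * c = N := by
    have := Finset.card_eq_sum_card_fiberwise
      (f := f) (s := (univ : Finset Ω)) (t := univ.image f)
      (fun x _ => Finset.mem_image_of_mem f (Finset.mem_univ x))
    rw [Finset.card_univ] at this
    rw [hNdef, this, Finset.sum_congr rfl (fun g hg => ?_), Finset.sum_const, smul_eq_mul,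
      mul_comm]
    obtain ⟨ω, _, rfl⟩ := Finset.mem_image.mp hg
    exact hfib ω
  unfold entOf H2
  have hterm : ∀ g : γ, (∑ ω, if f ω = g then ((N : ℝ))⁻¹ else 0)
        * Real.logb 2 (∑ ω, if f ω = g then ((N : ℝ))⁻¹ else 0)
      = if g ∈ univ.image f then ((c : ℝ) / N) * Real.logb 2 ((c : ℝ) / N) else 0 := by
    intro g
    rw [hq g]
    by_cases hg : g ∈ univ.image f
    · obtain ⟨ω, _, rfl⟩ := Finset.mem_image.mp hg
      rw [hfib ω, if_pos (Finset.mem_image_of_mem f (Finset.mem_univ ω))]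
    · have : (univ.filter fun ω => f ω = g) = ∅ := by
        ext ω; simp only [Finset.mem_filter, Finset.mem_univ, true_and, Finset.notMem_empty,
          iff_false]
        intro h; exact hg (h ▸ Finset.mem_image_of_mem f (Finset.mem_univ ω))
      simp [this, hg]
  rw [Finset.sum_congr rfl (fun g _ => hterm g), Finset.sum_ite_mem,
    Finset.univ_inter, Finset.sum_const, nsmul_eq_mul]
  have hc' : (0:ℝ) < c := by exact_mod_cast hc
  have hN' : (0:ℝ) < N := by exact_mod_cast hN
  have hkey : ((univ.image f).card : ℝ) * ((c : ℝ) / N) = 1 := by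
    rw [mul_div_assoc', div_eq_one_iff_eq hN'.ne']
    exact_mod_cast himg
  rw [← mul_assoc, hkey, one_mul, ← Real.logb_inv]
  congr 1
  field_simp

lemma entOf_agree {n : ℕ} {γ : Type*} [Fintype γ] [DecidableEq γ]
    (s : Finset (Fin n)) (f : Equiv.Perm (Fin n) → γ)
    (hf : ∀ σ τ : Equiv.Perm (Fin n), f σ = f τ ↔ ∀ a ∈ s, σ a = τ a) :
    entOf (fun _ : Equiv.Perm (Fin n) => ((n.factorial : ℝ))⁻¹) f
      = Real.logb 2 ((n.factorial : ℝ) / ((n - s.card).factorial : ℝ)) := by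
  classical
  have : Nonempty (Equiv.Perm (Fin n)) := ⟨1⟩
  have hcard : Fintype.card (Equiv.Perm (Fin n)) = n.factorial := by
    rw [Fintype.card_perm, Fintype.card_fin]
  have h := entOf_const_fiber (f := f) ((n - s.card).factorial) (Nat.factorial_pos _)
    (fun σ₀ => by
      rw [← card_perm_agree s σ₀]
      congr 1
      ext σ
      simp only [Finset.mem_filter, Finset.mem_univ, true_and]
      exact hf σ σ₀)
  rw [hcard] at h
  exact h

lemma odd_step (T : ℕ) :
    Nat.doubleFactorial (2*T+1) = (2*T+1) * Nat.doubleFactorial (2*T-1) := by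
  cases T with
  | zero => simp [Nat.doubleFactorial]
  | succ T =>
    have h : 2*(T+1)+1 = (2*(T+1)-1) + 2 := by omega
    rw [h, Nat.doubleFactorial_add_two]

lemma prod_even : ∀ T : ℕ, (∏ t : Fin T, (2*T - 2*(t:ℕ))) = Nat.doubleFactorial (2*T)
  | 0 => by simp [Nat.doubleFactorial]
  | T+1 => by
    rw [Fin.prod_univ_succ]
    simp only [Fin.val_succ, Fin.val_zero]
    rw [Finset.prod_congr rfl (fun (i : Fin T) _ => show 2*(T+1) - 2*((i:ℕ)+1)
        = 2*T - 2*(i:ℕ) by omega), prod_even T]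
    have h : 2*(T+1) - 2*0 = 2*T + 2 := by omega
    have h2 : 2*(T+1) = 2*T + 2 := by ring
    rw [h, h2, Nat.doubleFactorial_add_two]

lemma prod_odd : ∀ T : ℕ, (∏ t : Fin T, (2*T - 2*(t:ℕ) - 1)) = Nat.doubleFactorial (2*T - 1)
  | 0 => by simp [Nat.doubleFactorial]
  | T+1 => by
    rw [Fin.prod_univ_succ]
    simp only [Fin.val_succ, Fin.val_zero]
    rw [Finset.prod_congr rfl (fun (i : Fin T) _ => show 2*(T+1) - 2*((i:ℕ)+1) - 1
        = 2*T - 2*(i:ℕ) - 1 by omega), prod_odd T]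
    have h : 2*(T+1) - 2*0 - 1 = 2*T+1 := by omega
    have h2 : 2*(T+1) - 1 = 2*T + 1 := by omega
    rw [h, h2, odd_step]

lemma sq_ge : ∀ m : ℕ, ((2*m+1 : ℕ) : ℝ)
    ≤ (((Nat.doubleFactorial (2*m) : ℝ)) / ((Nat.doubleFactorial (2*m-1) : ℝ)))^2
  | 0 => by norm_num [Nat.doubleFactorial]
  | m+1 => by
    have IH := sq_ge m
    have hA : (0:ℝ) < (Nat.doubleFactorial (2*m) : ℝ) := by
      exact_mod_cast Nat.doubleFactorial_pos _
    have hB : (0:ℝ) < (Nat.doubleFactorial (2*m-1) : ℝ) := by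
      exact_mod_cast Nat.doubleFactorial_pos _
    have hnum : Nat.doubleFactorial (2*(m+1)) = (2*m+2) * Nat.doubleFactorial (2*m) := by
      have h : 2*(m+1) = 2*m + 2 := by ring
      rw [h, Nat.doubleFactorial_add_two]
    have hden : Nat.doubleFactorial (2*(m+1)-1) = (2*m+1) * Nat.doubleFactorial (2*m-1) := by
      have h : 2*(m+1)-1 = 2*m+1 := by omega
      rw [h, odd_step]
    rw [hnum, hden]
    push_cast
    set A := (Nat.doubleFactorial (2*m) : ℝ)
    set B := (Nat.doubleFactorial (2*m-1) : ℝ)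
    have key : (2*(m:ℝ)+1) * B^2 ≤ A^2 := by
      rw [div_pow, le_div_iff₀ (by positivity)] at IH
      push_cast at IH
      linarith
    have hm : (0:ℝ) ≤ (m:ℝ) := Nat.cast_nonneg m
    rw [div_pow, le_div_iff₀ (by positivity)]
    nlinarith [mul_le_mul_of_nonneg_left key (by positivity : (0:ℝ) ≤ (2*(m:ℝ)+2)^2),
      sq_nonneg B, hB, mul_pos hB hB]

lemma tendsto_part : Filter.Tendsto
    (fun m : ℕ => Real.logb 2
      ((Nat.doubleFactorial (2 * m) : ℝ) / (Nat.doubleFactorial (2 * m - 1) : ℝ)))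
    Filter.atTop Filter.atTop := by
  have hlow : Tendsto (fun m : ℕ => (1/2) * Real.logb 2 ((2*m+1 : ℕ) : ℝ)) atTop atTop := by
    apply Tendsto.const_mul_atTop (by norm_num : (0:ℝ) < 1/2)
    have X : Tendsto (fun m : ℕ => 2*m+1) atTop atTop :=
      tendsto_atTop_mono (fun m => by simp; omega) tendsto_id
    exact (Real.tendsto_logb_atTop (by norm_num : (1:ℝ) < 2)).comp
      (tendsto_natCast_atTop_atTop.comp X)
  apply tendsto_atTop_mono _ hlow
  intro m
  have hA : (0:ℝ) < (Nat.doubleFactorial (2*m) : ℝ) := by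
    exact_mod_cast Nat.doubleFactorial_pos _
  have hB : (0:ℝ) < (Nat.doubleFactorial (2*m-1) : ℝ) := by
    exact_mod_cast Nat.doubleFactorial_pos _
  have h1 : Real.logb 2 ((2*m+1:ℕ):ℝ)
      ≤ Real.logb 2 ((((Nat.doubleFactorial (2*m) : ℝ))
          / ((Nat.doubleFactorial (2*m-1) : ℝ)))^2) :=
    Real.logb_le_logb_of_le (by norm_num : (1:ℝ) < 2) (by positivity) (sq_ge m)
  rw [Real.logb_pow] at h1
  push_cast at h1 ⊢
  linarith

end Helpers

theorem stmt_10 {β : Type*} [Fintype β] [DecidableEq β] :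
    (∀ (n T : ℕ) (x : Fin n → β), Function.Injective x →
      ∀ blk : Fin n → Fin T, n = 2 * T →
        (∀ t, (univ.filter fun j => blk j = t).card = 2) →
        (∑ t : Fin T, Cof (fun _ : Equiv.Perm (Fin n) => ((n.factorial : ℝ))⁻¹)
            (fun j : {j // blk j = t} => fun σ => x (σ j.1))
            (fun σ => fun j : {j // blk j < t} => x (σ j.1)))
          = Real.logb 2 ((Nat.doubleFactorial n : ℝ) / (Nat.doubleFactorial (n - 1) : ℝ)))
    ∧ Filter.Tendsto
        (fun m : ℕ => Real.logb 2
          ((Nat.doubleFactorial (2 * m) : ℝ) / (Nat.doubleFactorial (2 * m - 1) : ℝ)))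
        Filter.atTop Filter.atTop := by
  constructor
  · intro n T x hx blk hn hcard2
    classical
    subst hn
    -- card of the "<t" index set
    have hslt : ∀ t : Fin T, (univ.filter fun j : Fin (2*T) => blk j < t).card = 2 * t.val := by
      intro t
      rw [Finset.card_eq_sum_card_fiberwise (f := blk)
        (t := univ.filter fun t' => t' < t)
        (fun j hj => by simp only [Finset.mem_coe, Finset.mem_filter, Finset.mem_univ, true_and] at hj ⊢
                        exact hj)]
      rw [Finset.sum_congr rfl (fun t' ht' => ?_), Finset.sum_const, smul_eq_mul, mul_comm]
      · congr 1
        rw [show (univ.filter fun t' : Fin T => t' < t) = Finset.Iio t from by ext; simp,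
          Fin.card_Iio]
      · have h1 : t' < t := by simpa using ht'
        rw [show ((univ.filter fun j : Fin (2*T) => blk j < t).filter fun j => blk j = t')
            = univ.filter fun j : Fin (2*T) => blk j = t' from ?_, hcard2 t']
        ext j
        simp only [Finset.mem_filter, Finset.mem_univ, true_and]
        constructor
        · rintro ⟨_, h⟩; exact h
        · intro h; exact ⟨h ▸ h1, h⟩
    -- per-step value of Cof
    have hfacpos : ∀ k : ℕ, (0:ℝ) < (k.factorial : ℝ) := fun k => by
      exact_mod_cast Nat.factorial_pos k
    have hcof : ∀ t : Fin T,
        Cof (fun _ : Equiv.Perm (Fin (2*T)) => (((2*T).factorial : ℝ))⁻¹)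
            (fun j : {j // blk j = t} => fun σ => x (σ j.1))
            (fun σ => fun j : {j // blk j < t} => x (σ j.1))
        = Real.logb 2 ((2*T - 2*(t:ℕ) : ℕ) : ℝ)
          - Real.logb 2 ((2*T - (2*(t:ℕ)+1) : ℕ) : ℝ) := by
      intro t
      have ht2 : 2*(t:ℕ) + 2 ≤ 2*T := by have := t.isLt; omega
      have hg : entOf (fun _ : Equiv.Perm (Fin (2*T)) => (((2*T).factorial : ℝ))⁻¹)
          (fun σ => fun j : {j // blk j < t} => x (σ j.1))
          = Real.logb 2 (((2*T).factorial : ℝ) / ((2*T - 2*(t:ℕ)).factorial : ℝ)) := by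
        have hiff : ∀ σ τ : Equiv.Perm (Fin (2*T)),
            ((fun j : {j // blk j < t} => x (σ j.1)) = fun j : {j // blk j < t} => x (τ j.1))
            ↔ ∀ a ∈ univ.filter fun j : Fin (2*T) => blk j < t, σ a = τ a := by
          intro σ τ
          rw [funext_iff]
          constructor
          · intro h a ha
            have hma : blk a < t := by simpa using ha
            exact hx (h ⟨a, hma⟩)
          · intro h j
            exact congrArg x (h j.1 (by simp [j.2]))
        have h := entOf_agree _ _ hiff
        rw [hslt t] at h
        exact h
      have hpair : ∀ i : {j // blk j = t},
          entOf (fun _ : Equiv.Perm (Fin (2*T)) => (((2*T).factorial : ℝ))⁻¹)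
            (fun σ => (x (σ i.1), fun j : {j // blk j < t} => x (σ j.1)))
          = Real.logb 2 (((2*T).factorial : ℝ) / ((2*T - (2*(t:ℕ)+1)).factorial : ℝ)) := by
        intro i
        have hnot : i.1 ∉ univ.filter fun j : Fin (2*T) => blk j < t := by
          simp [i.2]
        have hiff : ∀ σ τ : Equiv.Perm (Fin (2*T)),
            ((x (σ i.1), fun j : {j // blk j < t} => x (σ j.1))
              = (x (τ i.1), fun j : {j // blk j < t} => x (τ j.1)))
            ↔ ∀ a ∈ insert i.1 (univ.filter fun j : Fin (2*T) => blk j < t),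
                σ a = τ a := by
          intro σ τ
          rw [Prod.mk.injEq]
          constructor
          · rintro ⟨h1, h2⟩ a ha
            rcases Finset.mem_insert.mp ha with rfl | ha'
            · exact hx h1
            · have hma : blk a < t := by simpa using ha'
              exact hx (congrFun h2 ⟨a, hma⟩)
          · intro h
            exact ⟨congrArg x (h i.1 (Finset.mem_insert_self _ _)),
              funext fun j => congrArg x
                (h j.1 (Finset.mem_insert_of_mem (by simp [j.2])))⟩
        have h := entOf_agree _ _ hiff
        rw [Finset.card_insert_of_notMem hnot, hslt t] at h
        exact h
      have hjoint :
          entOf (fun _ : Equiv.Perm (Fin (2*T)) => (((2*T).factorial : ℝ))⁻¹)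
            (fun σ => ((fun i : {j // blk j = t} => x (σ i.1)),
              fun j : {j // blk j < t} => x (σ j.1)))
          = Real.logb 2 (((2*T).factorial : ℝ)
              / ((2*T - (2*(t:ℕ)+2)).factorial : ℝ)) := by
        have hdisj : Disjoint (univ.filter fun j : Fin (2*T) => blk j = t)
            (univ.filter fun j : Fin (2*T) => blk j < t) := by
          rw [Finset.disjoint_left]
          intro a ha ha'
          have h1 : blk a = t := by simpa using ha
          have h2 : blk a < t := by simpa using ha'
          exact absurd (h1 ▸ h2) (lt_irrefl t)
        have hiff : ∀ σ τ : Equiv.Perm (Fin (2*T)),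
            (((fun i : {j // blk j = t} => x (σ i.1)),
                (fun j : {j // blk j < t} => x (σ j.1)))
              = ((fun i : {j // blk j = t} => x (τ i.1)),
                (fun j : {j // blk j < t} => x (τ j.1))))
            ↔ ∀ a ∈ (univ.filter fun j : Fin (2*T) => blk j = t)
                ∪ (univ.filter fun j : Fin (2*T) => blk j < t), σ a = τ a := by
          intro σ τ
          rw [Prod.mk.injEq]
          constructor
          · rintro ⟨h1, h2⟩ a ha
            rcases Finset.mem_union.mp ha with ha' | ha'
            · exact hx (congrFun h1 ⟨a, by simpa using ha'⟩)
            · exact hx (congrFun h2 ⟨a, by simpa using ha'⟩)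
          · intro h
            exact ⟨funext fun i => congrArg x
                (h i.1 (Finset.mem_union_left _ (by simp [i.2]))),
              funext fun j => congrArg x
                (h j.1 (Finset.mem_union_right _ (by simp [j.2])))⟩
        have h := entOf_agree _ _ hiff
        rw [Finset.card_union_of_disjoint hdisj, hcard2 t, hslt t,
          show 2 + 2*(t:ℕ) = 2*(t:ℕ) + 2 from by omega] at h
        exact h
      unfold Cof
      simp only [hpair, hg, hjoint]
      rw [Finset.sum_const, Finset.card_univ,
        show Fintype.card {j // blk j = t} = 2 from by
          rw [Fintype.card_subtype]; exact hcard2 t,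
        nsmul_eq_mul]
      have hL0 := Real.logb_div (b := 2) (hfacpos (2*T)).ne'
        (hfacpos (2*T - 2*(t:ℕ))).ne'
      have hL1 := Real.logb_div (b := 2) (hfacpos (2*T)).ne'
        (hfacpos (2*T - (2*(t:ℕ)+1))).ne'
      have hL2 := Real.logb_div (b := 2) (hfacpos (2*T)).ne'
        (hfacpos (2*T - (2*(t:ℕ)+2))).ne'
      have c0pos : (0:ℝ) < ((2*T - 2*(t:ℕ) : ℕ) : ℝ) := by
        have h : 0 < 2*T - 2*(t:ℕ) := by omega
        exact_mod_cast h
      have c1pos : (0:ℝ) < ((2*T - (2*(t:ℕ)+1) : ℕ) : ℝ) := by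
        have h : 0 < 2*T - (2*(t:ℕ)+1) := by omega
        exact_mod_cast h
      have hstep0 : Real.logb 2 (((2*T - 2*(t:ℕ)).factorial : ℝ))
          = Real.logb 2 ((2*T - 2*(t:ℕ) : ℕ) : ℝ)
            + Real.logb 2 (((2*T - (2*(t:ℕ)+1)).factorial : ℝ)) := by
        have hnat : (2*T - 2*(t:ℕ)).factorial
            = (2*T - 2*(t:ℕ)) * (2*T - (2*(t:ℕ)+1)).factorial := by
          rw [show 2*T - 2*(t:ℕ) = (2*T - (2*(t:ℕ)+1)) + 1 from by omega,
            Nat.factorial_succ]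
        rw [hnat, Nat.cast_mul, Real.logb_mul c0pos.ne' (hfacpos _).ne']
      have hstep1 : Real.logb 2 (((2*T - (2*(t:ℕ)+1)).factorial : ℝ))
          = Real.logb 2 ((2*T - (2*(t:ℕ)+1) : ℕ) : ℝ)
            + Real.logb 2 (((2*T - (2*(t:ℕ)+2)).factorial : ℝ)) := by
        have hnat : (2*T - (2*(t:ℕ)+1)).factorial
            = (2*T - (2*(t:ℕ)+1)) * (2*T - (2*(t:ℕ)+2)).factorial := by
          rw [show 2*T - (2*(t:ℕ)+1) = (2*T - (2*(t:ℕ)+2)) + 1 from by omega,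
            Nat.factorial_succ]
        rw [hnat, Nat.cast_mul, Real.logb_mul c1pos.ne' (hfacpos _).ne']
      rw [hL0, hL1, hL2]
      push_cast
      linarith
    rw [Finset.sum_congr rfl (fun t _ => hcof t), Finset.sum_sub_distrib]
    have hne1 : ∀ t : Fin T, ((2*T - 2*(t:ℕ) : ℕ) : ℝ) ≠ 0 := fun t => by
      have h : 0 < 2*T - 2*(t:ℕ) := by have := t.isLt; omega
      exact_mod_cast h.ne'
    have hne2 : ∀ t : Fin T, ((2*T - (2*(t:ℕ)+1) : ℕ) : ℝ) ≠ 0 := fun t => by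
      have h : 0 < 2*T - (2*(t:ℕ)+1) := by have := t.isLt; omega
      exact_mod_cast h.ne'
    have hprod1 : ∑ t : Fin T, Real.logb 2 ((2*T - 2*(t:ℕ) : ℕ) : ℝ)
        = Real.logb 2 ((Nat.doubleFactorial (2*T) : ℝ)) := by
      rw [← Real.logb_prod univ _ (fun t _ => hne1 t), ← Nat.cast_prod, prod_even T]
    have hprod2 : ∑ t : Fin T, Real.logb 2 ((2*T - (2*(t:ℕ)+1) : ℕ) : ℝ)
        = Real.logb 2 ((Nat.doubleFactorial (2*T - 1) : ℝ)) := by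
      rw [← Real.logb_prod univ _ (fun t _ => hne2 t), ← Nat.cast_prod,
        Finset.prod_congr rfl (fun (t : Fin T) _ =>
          show 2*T - (2*(t:ℕ)+1) = 2*T - 2*(t:ℕ) - 1 from by omega),
        prod_odd T]
    rw [hprod1, hprod2]
    have hdfA : ((Nat.doubleFactorial (2*T) : ℝ)) ≠ 0 := by
      exact_mod_cast (Nat.doubleFactorial_pos _).ne'
    have hdfB : ((Nat.doubleFactorial (2*T - 1) : ℝ)) ≠ 0 := by
      exact_mod_cast (Nat.doubleFactorial_pos _).ne'
    rw [← Real.logb_div hdfA hdfB]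
  · exact tendsto_part
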